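/- For H ≠ 1/2, the function f_H(x) = e^{-x}(Γ(2H) - ∫₀ˣ e^{s} s^{2H-1} ds) + e^{x}(Γ(2H) - ∫₀ˣ e^{-s} s^{2H-1} ds) satisfies f_H(x) ~ 2(2H-1) x^{2H-2} as x → +∞, i.e., f_H(x)/(2(2H-1)x^{2H-2}) → 1. -/

import Mathlib

open MeasureTheory Filter Real Set


lemma intOn_exp_neg_rpow (b : ℝ) {x : ℝ} (hx : 0 < x) :
    IntegrableOn (fun s : ℝ => Real.exp (-s) * s ^ b) (Set.Ioi x) := by
  obtain ⟨N, hN⟩ := eventually_atTop.mp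
    ((tendsto_rpow_mul_exp_neg_mul_atTop_nhds_zero b (1/2) (by norm_num)).eventually
      (eventually_le_nhds (by norm_num : (0:ℝ) < 1)))
  have hxM : x ≤ max x N := le_max_left _ _
  rw [← Set.Ioc_union_Ioi_eq_Ioi hxM]
  apply MeasureTheory.IntegrableOn.union
  · have hcont : ContinuousOn (fun s : ℝ => Real.exp (-s) * s ^ b) (Set.Icc x (max x N)) := by
      apply ContinuousOn.mul
      · exact (Real.continuous_exp.comp continuous_neg).continuousOn
      · intro s hs
        exact (Real.continuousAt_rpow_const s b (Or.inl (hx.trans_le hs.1).ne')).continuousWithinAt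
    exact (hcont.integrableOn_Icc).mono_set Set.Ioc_subset_Icc_self
  · refine Integrable.mono' (exp_neg_integrableOn_Ioi (max x N) (by norm_num : (0:ℝ) < 1/2)) ?_ ?_
    · exact ((Real.measurable_exp.comp measurable_neg).mul
        (measurable_id.pow_const b)).aestronglyMeasurable
    · rw [ae_restrict_iff' measurableSet_Ioi]
      refine ae_of_all _ fun s hs => ?_
      have hs0 : 0 < s := hx.trans_le (hxM.trans (le_of_lt hs))
      have hsN : N ≤ s := (le_max_right x N).trans (le_of_lt hs)
      have h1 : s ^ b * Real.exp (-(1/2) * s) ≤ 1 := hN s hsN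
      have h2 : Real.exp (-s) = Real.exp (-(1/2) * s) * Real.exp (-(1/2) * s) := by
        rw [← Real.exp_add]; ring_nf
      rw [Real.norm_eq_abs, abs_of_nonneg (mul_nonneg (Real.exp_pos _).le (Real.rpow_nonneg hs0.le _))]
      calc Real.exp (-s) * s ^ b
          = (s ^ b * Real.exp (-(1/2) * s)) * Real.exp (-(1/2) * s) := by rw [h2]; ring
        _ ≤ 1 * Real.exp (-(1/2) * s) := by
            apply mul_le_mul_of_nonneg_right h1 (Real.exp_pos _).le
        _ = Real.exp (-(1/2) * s) := one_mul _


lemma hasDerivF (a : ℝ) {s : ℝ} (hs : 0 < s) :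
    HasDerivAt (fun t : ℝ => -(Real.exp (-t) * (t ^ a + a * t ^ (a - 1))))
      (Real.exp (-s) * s ^ a - a * (a - 1) * (Real.exp (-s) * s ^ (a - 2))) s := by
  have h1 : HasDerivAt (fun t : ℝ => Real.exp (-t)) (Real.exp (-s) * (-1)) s :=
    (hasDerivAt_neg s).exp
  have h2 : HasDerivAt (fun t : ℝ => t ^ a + a * t ^ (a - 1))
      (a * s ^ (a - 1) + a * ((a - 1) * s ^ (a - 2))) s := by
    have := (Real.hasDerivAt_rpow_const (p := a) (Or.inl hs.ne')).add
      ((Real.hasDerivAt_rpow_const (p := a - 1) (Or.inl hs.ne')).const_mul a)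
    rwa [show a - 1 - 1 = a - 2 by ring] at this
  refine (h1.fun_mul h2).fun_neg.congr_deriv ?_
  ring

lemma hasDerivG (a : ℝ) {s : ℝ} (hs : 0 < s) :
    HasDerivAt (fun t : ℝ => Real.exp t * (t ^ a - a * t ^ (a - 1)))
      (Real.exp s * s ^ a - a * (a - 1) * (Real.exp s * s ^ (a - 2))) s := by
  have h1 : HasDerivAt Real.exp (Real.exp s) s := Real.hasDerivAt_exp s
  have h2 : HasDerivAt (fun t : ℝ => t ^ a - a * t ^ (a - 1))
      (a * s ^ (a - 1) - a * ((a - 1) * s ^ (a - 2))) s := by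
    have := (Real.hasDerivAt_rpow_const (p := a) (Or.inl hs.ne')).sub
      ((Real.hasDerivAt_rpow_const (p := a - 1) (Or.inl hs.ne')).const_mul a)
    rwa [show a - 1 - 1 = a - 2 by ring] at this
  refine (h1.fun_mul h2).congr_deriv ?_
  ring

lemma tail_formula (a : ℝ) {x : ℝ} (hx : 0 < x) :
    ∫ s in Set.Ioi x, Real.exp (-s) * s ^ a
      = Real.exp (-x) * (x ^ a + a * x ^ (a - 1))
        + a * (a - 1) * ∫ s in Set.Ioi x, Real.exp (-s) * s ^ (a - 2) := by
  have hint1 := intOn_exp_neg_rpow a hx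
  have hint2 := intOn_exp_neg_rpow (a - 2) hx
  have key : ∫ s in Set.Ioi x,
      (Real.exp (-s) * s ^ a - a * (a - 1) * (Real.exp (-s) * s ^ (a - 2)))
      = Real.exp (-x) * (x ^ a + a * x ^ (a - 1)) := by
    have hlim : Tendsto (fun t : ℝ => -(Real.exp (-t) * (t ^ a + a * t ^ (a - 1))))
        atTop (nhds 0) := by
      have t1 := tendsto_rpow_mul_exp_neg_mul_atTop_nhds_zero a 1 one_pos
      have t2 := tendsto_rpow_mul_exp_neg_mul_atTop_nhds_zero (a-1) 1 one_pos
      have h := (t1.add (t2.const_mul a)).neg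
      have h2 := h.congr (fun t => show
          -(t ^ a * Real.exp (-1*t) + a * (t ^ (a-1) * Real.exp (-1*t)))
            = -(Real.exp (-t) * (t ^ a + a * t ^ (a - 1))) by rw [neg_one_mul]; ring)
      simpa using h2
    have := integral_Ioi_of_hasDerivAt_of_tendsto
      (f := fun t : ℝ => -(Real.exp (-t) * (t ^ a + a * t ^ (a - 1))))
      (f' := fun s => Real.exp (-s) * s ^ a - a * (a - 1) * (Real.exp (-s) * s ^ (a - 2)))
      ((hasDerivF a hx).continuousAt).continuousWithinAt
      (fun s hs => hasDerivF a (hx.trans hs))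
      (hint1.sub (hint2.const_mul _)) hlim
    rw [this]; ring
  rw [MeasureTheory.integral_sub hint1 (hint2.const_mul _),
    MeasureTheory.integral_const_mul] at key
  linarith


lemma ftc_fin (a : ℝ) {x : ℝ} (hx1 : 1 ≤ x) :
    ∫ s in (1:ℝ)..x, Real.exp s * s ^ a
      = (Real.exp x * (x ^ a - a * x ^ (a-1)) - Real.exp 1 * (1 - a))
        + a*(a-1) * ∫ s in (1:ℝ)..x, Real.exp s * s ^ (a-2) := by
  have hpos : ∀ t ∈ Set.uIcc (1:ℝ) x, (0:ℝ) < t := by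
    intro t ht
    rw [Set.uIcc_of_le hx1] at ht
    linarith [ht.1]
  have hco : ∀ b : ℝ, ContinuousOn (fun s : ℝ => Real.exp s * s ^ b) (Set.uIcc (1:ℝ) x) :=
    fun b => Real.continuous_exp.continuousOn.mul
      (fun s hs => (Real.continuousAt_rpow_const s b (Or.inl (hpos s hs).ne')).continuousWithinAt)
  have hii1 : IntervalIntegrable (fun s : ℝ => Real.exp s * s ^ a) volume 1 x :=
    (hco a).intervalIntegrable
  have hii2 : IntervalIntegrable (fun s : ℝ => Real.exp s * s ^ (a-2)) volume 1 x :=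
    (hco (a-2)).intervalIntegrable
  have key := intervalIntegral.integral_eq_sub_of_hasDerivAt
    (f := fun t : ℝ => Real.exp t * (t ^ a - a * t ^ (a-1)))
    (f' := fun s : ℝ => Real.exp s * s ^ a - a*(a-1) * (Real.exp s * s ^ (a-2)))
    (fun t ht => hasDerivG a (hpos t ht)) (hii1.sub (hii2.const_mul _))
  rw [intervalIntegral.integral_sub hii1 (hii2.const_mul _),
    intervalIntegral.integral_const_mul] at key
  simp only [Real.one_rpow] at key
  linarith

lemma gamma_split {a : ℝ} (ha : -1 < a) {x : ℝ} (hx : 0 < x) :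
    Real.Gamma (a+1) - (∫ s in Set.Ioo (0:ℝ) x, Real.exp (-s) * s ^ a)
      = ∫ s in Set.Ioi x, Real.exp (-s) * s ^ a := by
  have h0 : 0 < a + 1 := by linarith
  have hint : IntegrableOn (fun s : ℝ => Real.exp (-s) * s ^ a) (Set.Ioi 0) := by
    have := Real.GammaIntegral_convergent h0
    simpa using this
  have hga : Real.Gamma (a+1) = ∫ s in Set.Ioi 0, Real.exp (-s) * s ^ a := by
    rw [Real.Gamma_eq_integral h0]; norm_num
  rw [hga, ← Set.Ioc_union_Ioi_eq_Ioi hx.le,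
    MeasureTheory.setIntegral_union (Set.Ioc_disjoint_Ioi le_rfl) measurableSet_Ioi
      (hint.mono_set fun s hs => hs.1) (hint.mono_set fun s hs => hx.trans hs),
    MeasureTheory.integral_Ioc_eq_integral_Ioo]
  ring

lemma plus_split {a : ℝ} (ha : -1 < a) {x : ℝ} (hx1 : 1 ≤ x) :
    (∫ s in Set.Ioo (0:ℝ) x, Real.exp s * s ^ a)
      = (∫ s in Set.Ioo (0:ℝ) 1, Real.exp s * s ^ a)
        + ∫ s in (1:ℝ)..x, Real.exp s * s ^ a := by
  have hx : (0:ℝ) < x := lt_of_lt_of_le one_pos hx1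
  have hi : IntegrableOn (fun s : ℝ => Real.exp s * s ^ a) (Set.Ioc 0 x) := by
    have h1 : IntegrableOn (fun s : ℝ => s ^ a) (Set.Ioc 0 x) :=
      (intervalIntegrable_iff_integrableOn_Ioc_of_le hx.le).mp
        (intervalIntegral.intervalIntegrable_rpow' ha)
    refine h1.bdd_mul (c := Real.exp x) Real.continuous_exp.aestronglyMeasurable ?_
    rw [ae_restrict_iff' measurableSet_Ioc]
    exact ae_of_all _ fun s hs => by
      rw [Real.norm_eq_abs, Real.abs_exp]; exact Real.exp_le_exp.mpr hs.2
  rw [← MeasureTheory.integral_Ioc_eq_integral_Ioo,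
    ← MeasureTheory.integral_Ioc_eq_integral_Ioo,
    intervalIntegral.integral_of_le hx1, ← Set.Ioc_union_Ioc_eq_Ioc zero_le_one hx1,
    MeasureTheory.setIntegral_union (Set.Ioc_disjoint_Ioc_of_le le_rfl) measurableSet_Ioc
      (hi.mono_set (Set.Ioc_subset_Ioc_right hx1)) (hi.mono_set (Set.Ioc_subset_Ioc_left zero_le_one))]


theorem fH_asymptotics (H : ℝ) (hH : H ∈ Set.Ioc (0:ℝ) 1) (hne : H ≠ 1/2)
    (f : ℝ → ℝ)
    (hf : ∀ x : ℝ, 0 < x → f x =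
      Real.exp (-x) * (Real.Gamma (2*H) - ∫ s in Set.Ioo (0:ℝ) x, Real.exp s * s ^ (2*H-1)) +
      Real.exp x * (Real.Gamma (2*H) - ∫ s in Set.Ioo (0:ℝ) x, Real.exp (-s) * s ^ (2*H-1))) :
    Tendsto (fun x : ℝ => f x / (2*(2*H-1) * x ^ (2*H-2))) atTop (nhds 1) := by
  obtain ⟨hH0, hH1⟩ := hH
  set a : ℝ := 2*H - 1 with ha
  have hA1 : -1 < a := by rw [ha]; linarith
  have hA2 : a ≤ 1 := by rw [ha]; linarith
  have hane : a ≠ 0 := by rw [ha]; intro h; exact hne (by linarith)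
  have h21 : 2*H = a + 1 := by rw [ha]; ring
  have h22 : 2*H - 2 = a - 1 := by rw [ha]; ring
  set K : ℝ := Real.Gamma (2*H) - (∫ s in Set.Ioo (0:ℝ) 1, Real.exp s * s ^ a)
      + Real.exp 1 * (1 - a) with hK
  -- main identity
  have main_id : ∀ x : ℝ, 2 ≤ x →
      f x - 2*a*x^(a-1) = K * Real.exp (-x)
        - a*(a-1) * (Real.exp (-x) * ∫ s in (1:ℝ)..x, Real.exp s * s ^ (a-2))
        + a*(a-1) * (Real.exp x * ∫ s in Set.Ioi x, Real.exp (-s) * s ^ (a-2)) := by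
    intro x hx2
    have hx1 : (1:ℝ) ≤ x := by linarith
    have hx0 : (0:ℝ) < x := by linarith
    have hgs : Real.Gamma (2*H) - (∫ s in Set.Ioo (0:ℝ) x, Real.exp (-s) * s ^ a)
        = ∫ s in Set.Ioi x, Real.exp (-s) * s ^ a := by
      rw [h21]; exact gamma_split hA1 hx0
    have hex : Real.exp (-x) * Real.exp x = 1 := by
      rw [← Real.exp_add]; simp
    rw [hf x hx0, plus_split hA1 hx1, ftc_fin a hx1, hgs, tail_formula a hx0, hK]
    linear_combination (2*a*x^(a-1)) * hex
  -- J2 bounds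
  have j2nonneg : ∀ x : ℝ, 0 < x → 0 ≤ ∫ s in Set.Ioi x, Real.exp (-s) * s ^ (a-2) :=
    fun x hx => setIntegral_nonneg measurableSet_Ioi
      (fun s hs => mul_nonneg (Real.exp_pos _).le (Real.rpow_nonneg (le_of_lt (hx.trans hs)) _))
  have j2upper : ∀ x : ℝ, 0 < x →
      (∫ s in Set.Ioi x, Real.exp (-s) * s ^ (a-2)) ≤ x ^ (a-2) * Real.exp (-x) := by
    intro x hx
    have hexpint : IntegrableOn (fun s : ℝ => Real.exp (-s)) (Set.Ioi x) := by
      have := exp_neg_integrableOn_Ioi x one_pos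
      simpa only [neg_mul, one_mul] using this
    calc (∫ s in Set.Ioi x, Real.exp (-s) * s ^ (a-2))
        ≤ ∫ s in Set.Ioi x, x ^ (a-2) * Real.exp (-s) := by
          refine setIntegral_mono_on (intOn_exp_neg_rpow (a-2) hx) (hexpint.const_mul _)
            measurableSet_Ioi (fun s hs => ?_)
          rw [mul_comm (x ^ (a-2))]
          exact mul_le_mul_of_nonneg_left
            (Real.rpow_le_rpow_of_nonpos hx (le_of_lt hs) (by linarith)) (Real.exp_pos _).le
      _ = x ^ (a-2) * Real.exp (-x) := by
          rw [MeasureTheory.integral_const_mul, integral_exp_neg_Ioi]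
  -- J1 bounds
  have j1nonneg : ∀ x : ℝ, 2 ≤ x → 0 ≤ ∫ s in (1:ℝ)..x, Real.exp s * s ^ (a-2) := by
    intro x hx
    apply intervalIntegral.integral_nonneg (by linarith)
    intro u hu
    exact mul_nonneg (Real.exp_pos _).le (Real.rpow_nonneg (by linarith [hu.1]) _)
  have hco : ∀ (u v : ℝ), 1 ≤ u → u ≤ v →
      IntervalIntegrable (fun s : ℝ => Real.exp s * s ^ (a-2)) volume u v := by
    intro u v hu huv
    apply ContinuousOn.intervalIntegrable
    intro s hs
    rw [Set.uIcc_of_le huv] at hs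
    have hs0 : (0:ℝ) < s := by linarith [hs.1]
    exact (Real.continuous_exp.continuousAt.mul
      (Real.continuousAt_rpow_const s (a-2) (Or.inl hs0.ne'))).continuousWithinAt
  have j1upper : ∀ x : ℝ, 2 ≤ x →
      (∫ s in (1:ℝ)..x, Real.exp s * s ^ (a-2))
        ≤ Real.exp (x/2) + (x/2) ^ (a-2) * Real.exp x := by
    intro x hx
    have h12 : (1:ℝ) ≤ x/2 := by linarith
    have h2x : x/2 ≤ x := by linarith
    have hx2pos : (0:ℝ) < x/2 := by linarith
    rw [← intervalIntegral.integral_add_adjacent_intervals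
      (hco 1 (x/2) le_rfl h12) (hco (x/2) x h12 h2x)]
    have b1 : (∫ s in (1:ℝ)..(x/2), Real.exp s * s ^ (a-2)) ≤ Real.exp (x/2) := by
      calc (∫ s in (1:ℝ)..(x/2), Real.exp s * s ^ (a-2))
          ≤ ∫ s in (1:ℝ)..(x/2), Real.exp s := by
            apply intervalIntegral.integral_mono_on h12 (hco 1 (x/2) le_rfl h12)
              (Real.continuous_exp.intervalIntegrable _ _)
            intro s hs
            have h1 : s ^ (a-2) ≤ 1 :=
              Real.rpow_le_one_of_one_le_of_nonpos hs.1 (by linarith)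
            calc Real.exp s * s ^ (a-2) ≤ Real.exp s * 1 :=
                  mul_le_mul_of_nonneg_left h1 (Real.exp_pos _).le
              _ = Real.exp s := mul_one _
        _ = Real.exp (x/2) - Real.exp 1 := integral_exp
        _ ≤ Real.exp (x/2) := by linarith [Real.exp_pos 1]
    have b2 : (∫ s in (x/2)..x, Real.exp s * s ^ (a-2)) ≤ (x/2) ^ (a-2) * Real.exp x := by
      calc (∫ s in (x/2)..x, Real.exp s * s ^ (a-2))
          ≤ ∫ s in (x/2)..x, (x/2) ^ (a-2) * Real.exp s := by
            apply intervalIntegral.integral_mono_on h2x (hco (x/2) x h12 h2x)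
              ((continuous_const.mul Real.continuous_exp).intervalIntegrable _ _)
            intro s hs
            show Real.exp s * s ^ (a-2) ≤ (x/2) ^ (a-2) * Real.exp s
            rw [mul_comm ((x/2) ^ (a-2))]
            exact mul_le_mul_of_nonneg_left
              (Real.rpow_le_rpow_of_nonpos hx2pos hs.1 (by linarith)) (Real.exp_pos _).le
        _ = (x/2) ^ (a-2) * (Real.exp x - Real.exp (x/2)) := by
            rw [intervalIntegral.integral_const_mul, integral_exp]
        _ ≤ (x/2) ^ (a-2) * Real.exp x := by
            apply mul_le_mul_of_nonneg_left (by linarith [Real.exp_pos (x/2)])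
              (Real.rpow_nonneg hx2pos.le _)
    linarith
  set c : ℝ := |a*(a-1)| with hc
  have hcnn : 0 ≤ c := abs_nonneg _
  have key : Tendsto (fun x : ℝ => (f x - 2*a*x^(a-1)) / x^(a-1)) atTop (nhds 0) := by
    apply squeeze_zero_norm' (a := fun x : ℝ =>
      |K| * (x ^ (1-a) * Real.exp (-1*x))
      + c * (x ^ (1-a) * Real.exp (-(1/2)*x))
      + (c * (2:ℝ)^(2-a) + c) * x⁻¹)
    · filter_upwards [eventually_ge_atTop (2:ℝ)] with x hx2
      have hx0 : (0:ℝ) < x := by linarith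
      have hp : (0:ℝ) < x ^ (a-1) := Real.rpow_pos_of_pos hx0 _
      have hex : Real.exp (-x) * Real.exp x = 1 := by rw [← Real.exp_add]; simp
      have hex2 : Real.exp (-x) * Real.exp (x/2) = Real.exp (-(1/2)*x) := by
        rw [← Real.exp_add]; congr 1; ring
      have e1 : x ^ (1-a) * x ^ (a-1) = 1 := by
        rw [← Real.rpow_add hx0]; norm_num
      have e2 : x⁻¹ * x ^ (a-1) = x ^ (a-2) := by
        rw [← Real.rpow_neg_one x, ← Real.rpow_add hx0, show (-1) + (a-1) = a-2 by ring]
      have e3 : (x/2 : ℝ) ^ (a-2) = (2:ℝ)^(2-a) * x^(a-2) := by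
        rw [Real.div_rpow hx0.le (by norm_num : (0:ℝ) ≤ 2), div_eq_mul_inv,
          ← Real.rpow_neg (by norm_num : (0:ℝ) ≤ 2), show -(a-2) = 2-a by ring]
        ring
      set J1 : ℝ := ∫ s in (1:ℝ)..x, Real.exp s * s ^ (a-2) with hJ1def
      set J2 : ℝ := ∫ s in Set.Ioi x, Real.exp (-s) * s ^ (a-2) with hJ2def
      have hJ1 : Real.exp (-x) * J1 ≤ Real.exp (-(1/2)*x) + (2:ℝ)^(2-a)*x^(a-2) := by
        have h := mul_le_mul_of_nonneg_left (j1upper x hx2) (Real.exp_pos (-x)).le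
        rw [mul_add, hex2] at h
        have h4 : Real.exp (-x) * ((x/2)^(a-2) * Real.exp x) = (2:ℝ)^(2-a)*x^(a-2) := by
          rw [e3]; linear_combination ((2:ℝ)^(2-a)*x^(a-2)) * hex
        rw [h4] at h
        exact h
      have hJ2 : Real.exp x * J2 ≤ x^(a-2) := by
        have h := mul_le_mul_of_nonneg_left (j2upper x hx0) (Real.exp_pos x).le
        have h5 : Real.exp x * (x^(a-2) * Real.exp (-x)) = x^(a-2) := by
          linear_combination x^(a-2) * hex
        rw [h5] at h
        exact h
      have hJ1nn : 0 ≤ Real.exp (-x) * J1 :=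
        mul_nonneg (Real.exp_pos _).le (j1nonneg x hx2)
      have hJ2nn : 0 ≤ Real.exp x * J2 :=
        mul_nonneg (Real.exp_pos _).le (j2nonneg x hx0)
      -- compute the norm
      rw [Real.norm_eq_abs, main_id x hx2, abs_div, abs_of_pos hp, div_le_iff₀ hp]
      have habs : |K * Real.exp (-x) - a*(a-1) * (Real.exp (-x) * J1)
            + a*(a-1) * (Real.exp x * J2)|
          ≤ |K| * Real.exp (-x) + c * (Real.exp (-x) * J1) + c * (Real.exp x * J2) := by
        have t1 : |K * Real.exp (-x)| = |K| * Real.exp (-x) := by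
          rw [abs_mul, Real.abs_exp]
        have t2 : |a*(a-1) * (Real.exp (-x) * J1)| = c * (Real.exp (-x) * J1) := by
          rw [abs_mul, hc, abs_of_nonneg hJ1nn]
        have t3 : |a*(a-1) * (Real.exp x * J2)| = c * (Real.exp x * J2) := by
          rw [abs_mul, hc, abs_of_nonneg hJ2nn]
        calc |K * Real.exp (-x) - a*(a-1) * (Real.exp (-x) * J1) + a*(a-1) * (Real.exp x * J2)|
            ≤ |K * Real.exp (-x) - a*(a-1) * (Real.exp (-x) * J1)| + |a*(a-1) * (Real.exp x * J2)| :=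
              abs_add_le _ _
          _ ≤ |K * Real.exp (-x)| + |a*(a-1) * (Real.exp (-x) * J1)| + |a*(a-1) * (Real.exp x * J2)| := by
              linarith [abs_sub (K * Real.exp (-x)) (a*(a-1) * (Real.exp (-x) * J1))]
          _ = |K| * Real.exp (-x) + c * (Real.exp (-x) * J1) + c * (Real.exp x * J2) := by
              rw [t1, t2, t3]
      have hrhs : (|K| * (x ^ (1-a) * Real.exp (-1*x))
            + c * (x ^ (1-a) * Real.exp (-(1/2)*x))
            + (c * (2:ℝ)^(2-a) + c) * x⁻¹) * x^(a-1)
          = |K| * Real.exp (-1*x) + c * Real.exp (-(1/2)*x)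
            + (c * (2:ℝ)^(2-a) + c) * x^(a-2) := by
        linear_combination (|K| * Real.exp (-1*x) + c * Real.exp (-(1/2)*x)) * e1
          + (c * (2:ℝ)^(2-a) + c) * e2
      rw [hrhs, neg_one_mul]
      have step2 : c * (Real.exp (-x) * J1)
          ≤ c * Real.exp (-(1/2)*x) + c * (2:ℝ)^(2-a)*x^(a-2) := by
        nlinarith [mul_le_mul_of_nonneg_left hJ1 hcnn]
      have step3 : c * (Real.exp x * J2) ≤ c * x^(a-2) :=
        mul_le_mul_of_nonneg_left hJ2 hcnn
      nlinarith [habs]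
    · have t1 := (tendsto_rpow_mul_exp_neg_mul_atTop_nhds_zero (1-a) 1 one_pos).const_mul (|K|)
      have t2 := (tendsto_rpow_mul_exp_neg_mul_atTop_nhds_zero (1-a) (1/2)
        (by norm_num : (0:ℝ) < 1/2)).const_mul c
      have t3 := (tendsto_inv_atTop_zero (𝕜 := ℝ)).const_mul (c * (2:ℝ)^(2-a) + c)
      have := (t1.add t2).add t3
      simpa using this
  -- conclude
  have h2a : (2*a) ≠ 0 := mul_ne_zero two_ne_zero hane
  have hgoal : Tendsto (fun x : ℝ => f x / (2*a * x^(a-1))) atTop (nhds 1) := by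
    have h := (key.mul_const (1/(2*a))).add_const 1
    simp only [zero_mul, zero_add] at h
    apply h.congr'
    filter_upwards [eventually_gt_atTop (0:ℝ)] with x hx
    have hp : x ^ (a-1) ≠ 0 := (Real.rpow_pos_of_pos hx _).ne'
    field_simp
    ring
  simp only [h22]
  exact hgoal
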